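/- arXiv:1612.08008 — 2 statements merged into one kernel-verified Lean document; each statement's English description precedes it below -/
import Mathlib

section
/- Let K ≥ 1 be an integer and let Z₁, Z₂, …, Z_K be real numbers. Then max( Z₁, max_{L=2,…,K} ( Z_L − ((L−1)/L) · Z_{L−1} ) ) ≥ (2/(K+1)) · Z_K. -/
/-- The maximum of `Z 1` and the quantities `Z L - ((L-1)/L) * Z (L-1)` for
`L = 2, …, K` is at least `(2/(K+1)) * Z K`.  (For `L = 1` the coefficient
`(L-1)/L` vanishes, so the `L = 1` term of the sup below is exactly `Z 1`.) -/
theorem max_increment_ge (K : ℕ) (hK : 1 ≤ K) (Z : ℕ → ℝ) :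
    (2 / ((K:ℝ) + 1)) * Z K ≤
      (Finset.Icc 1 K).sup' (Finset.nonempty_Icc.2 hK)
        (fun L => Z L - (((L:ℝ) - 1) / (L:ℝ)) * Z (L - 1)) := by
  set M := (Finset.Icc 1 K).sup' (Finset.nonempty_Icc.2 hK)
      (fun L => Z L - (((L:ℝ) - 1) / (L:ℝ)) * Z (L - 1)) with hMdef
  have hle : ∀ L, 1 ≤ L → L ≤ K → Z L - (((L:ℝ) - 1) / (L:ℝ)) * Z (L - 1) ≤ M := by
    intro L h1 h2
    exact Finset.le_sup' (fun L => Z L - (((L:ℝ) - 1) / (L:ℝ)) * Z (L - 1)) (Finset.mem_Icc.2 ⟨h1, h2⟩)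
  have key : ∀ L, 1 ≤ L → L ≤ K → Z L ≤ ((L:ℝ) + 1) / 2 * M := by
    intro L
    induction L with
    | zero => omega
    | succ n ih =>
      intro _ hnK
      rcases Nat.eq_zero_or_pos n with hn | hn
      · subst hn
        have h := hle 1 le_rfl (by omega)
        simp at h
        push_cast
        linarith
      · have hZ : Z n ≤ ((n:ℝ) + 1) / 2 * M := ih hn (by omega)
        have h := hle (n+1) (by omega) hnK
        simp only [Nat.add_sub_cancel] at h
        have hpos : (0:ℝ) < (n:ℝ) + 1 := by positivity
        have hcoef : (0:ℝ) ≤ ((n:ℝ) + 1 - 1) / ((n:ℝ) + 1) := by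
          apply div_nonneg <;> [skip; linarith]
          simp
        push_cast at h ⊢
        have h2 : (((n:ℝ) + 1 - 1) / ((n:ℝ) + 1)) * Z n ≤
            (((n:ℝ) + 1 - 1) / ((n:ℝ) + 1)) * (((n:ℝ) + 1) / 2 * M) :=
          mul_le_mul_of_nonneg_left hZ hcoef
        have h3 : (((n:ℝ) + 1 - 1) / ((n:ℝ) + 1)) * (((n:ℝ) + 1) / 2 * M)
            = (n:ℝ) / 2 * M := by
          field_simp
          ring
        nlinarith
  have hZK : Z K ≤ ((K:ℝ) + 1) / 2 * M := key K hK le_rfl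
  have hKpos : (0:ℝ) < (K:ℝ) + 1 := by positivity
  rw [div_mul_eq_mul_div, div_le_iff₀ hKpos] at *
  nlinarith
end

section
/- Let x₁, …, x_N be points in [0,1), let K be a positive integer with K ≤ N/2, and let L be an integer with 1 ≤ L ≤ K and 2LK ≤ N. Set M = ⌊N/K⌋ + 1 and define A_i = #{ 1 ≤ n ≤ N : x_n ∈ [ i·K/N, (i+1)·K/N ) } for i = 0, 1, …, ⌊N/K⌋ − 1 and A_{⌊N/K⌋} = #{ 1 ≤ n ≤ N : x_n ∈ [ ⌊N/K⌋·K/N, 1 ) }, with indices extended cyclically modulo M. Then #{ 1 ≤ l ≠ m ≤ N : ‖x_l − x_m‖ < LK/N } ≥ ∑_{i=0}^{⌊N/K⌋} ( A_i(A_i − 1) + 2·A_i·(A_{i+1} + A_{i+2} + ⋯ + A_{i+L−1}) ). -/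
open scoped Classical

noncomputable def nidist (x : ℝ) : ℝ := |x - round x|

lemma nidist_le (y : ℝ) (z : ℤ) : nidist y ≤ |y - z| := round_le y z

lemma nidist_neg (y : ℝ) : nidist (-y) = nidist y := by
  have h1 : nidist (-y) ≤ nidist y := by
    have h := round_le (-y) (-(round y))
    calc nidist (-y) ≤ |(-y) - ((-(round y) : ℤ) : ℝ)| := h
      _ = |y - round y| := by push_cast; rw [show -y - -(round y : ℝ) = -(y - round y) by ring, abs_neg]
      _ = nidist y := rfl
  have h2 : nidist y ≤ nidist (-y) := by
    have h := round_le y (-(round (-y)))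
    calc nidist y ≤ |y - ((-(round (-y)) : ℤ) : ℝ)| := h
      _ = |(-y) - round (-y)| := by push_cast; rw [show y - -((round (-y) : ℝ)) = -(-y - round (-y)) by ring, abs_neg]
      _ = nidist (-y) := rfl
  linarith

lemma shift_ne {M a k : ℕ} (ha : a < M) (hk1 : 1 ≤ k) (hkM : k < M) : (a + k) % M ≠ a := by
  intro h
  have h1 : a ≡ a + k [MOD M] := by
    unfold Nat.ModEq
    rw [Nat.mod_eq_of_lt ha]
    exact h.symm
  have h2 : M ∣ (a + k) - a := (Nat.modEq_iff_dvd' (by omega)).1 h1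
  have h3 : M ∣ k := by simpa using h2
  have := Nat.le_of_dvd (by omega) h3
  omega

lemma mod_ne_mod {M a c : ℕ} (hac : a < c) (hd : c - a < M) : a % M ≠ c % M := by
  intro h
  have h2 : M ∣ c - a := (Nat.modEq_iff_dvd' hac.le).1 h
  have := Nat.le_of_dvd (by omega) h2
  omega

noncomputable def pairCount (x : ℕ → ℝ) (N : ℕ) (s : ℝ) : ℕ :=
  (((Finset.Icc 1 N) ×ˢ (Finset.Icc 1 N)).filter
    (fun p => p.1 ≠ p.2 ∧ nidist (x p.1 - x p.2) < s / N)).card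

set_option maxHeartbeats 4000000 in
/-- Lower bound for the pair correlation count at scale `L*K/N` in terms of the
box counts `A i` for the partition of `[0,1)` into `⌊N/K⌋` intervals of length
`K/N` and a final interval `[⌊N/K⌋·K/N, 1)`, indices taken cyclically modulo
`M = ⌊N/K⌋ + 1`. -/
theorem pairCount_lower_bound (N K L : ℕ) (x : ℕ → ℝ)
    (hx : ∀ n, x n ∈ Set.Ico (0:ℝ) 1)
    (hK : 1 ≤ K) (hKN : 2 * K ≤ N) (hL1 : 1 ≤ L) (hLK : L ≤ K) (hLKN : 2 * L * K ≤ N)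
    (M : ℕ) (hM : M = N / K + 1)
    (A : ℕ → ℕ)
    (hA : ∀ i, A i = ((Finset.Icc 1 N).filter (fun n =>
        x n ∈ Set.Ico (((i % M : ℕ) : ℝ) * K / N)
          (if i % M = N / K then 1 else (((i % M : ℕ) : ℝ) + 1) * K / N))).card) :
    ∑ i ∈ Finset.range M,
        ((A i : ℝ) * ((A i : ℝ) - 1)
          + 2 * (A i : ℝ) * ∑ j ∈ Finset.Ico (i+1) (i+L), (A j : ℝ))
      ≤ (pairCount x N ((L * K : ℕ) : ℝ) : ℝ) := by
  classical
  have hK0 : 0 < K := hK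
  have hN0 : 0 < N := by omega
  set Q := N / K with hQ
  have hQK : N < (Q + 1) * K := by
    have h1 := Nat.div_add_mod N K
    rw [← hQ] at h1
    have h2 := Nat.mod_lt N hK0
    have h3 : (Q + 1) * K = K * Q + K := by ring
    omega
  have h2LM : 2 * L < M := by
    have : 2 * L ≤ Q := (Nat.le_div_iff_mul_le hK0).2 hLKN
    omega
  have hLM : L < M := by omega
  have hM0 : 0 < M := by omega
  have hNR : (0:ℝ) < N := by exact_mod_cast hN0
  have hKR : (0:ℝ) < K := by exact_mod_cast hK0
  set b : ℕ → ℕ := fun n => min ⌊x n * N / K⌋₊ Q with hb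
  set B : ℕ → Finset ℕ := fun i => (Finset.Icc 1 N).filter (fun n => b n = i) with hB
  have hx0 : ∀ n, 0 ≤ x n := fun n => (hx n).1
  have hx1 : ∀ n, x n < 1 := fun n => (hx n).2
  have hxNK : ∀ n, 0 ≤ x n * N / K := fun n => by
    have := hx0 n; positivity
  have hbQ : ∀ n, b n ≤ Q := fun n => min_le_right _ _
  have hbM : ∀ n, b n < M := fun n => by have := hbQ n; omega
  have key1 : ∀ (c : ℝ) n, c * K / N ≤ x n ↔ c ≤ x n * N / K := by
    intro c n
    rw [div_le_iff₀ hNR, le_div_iff₀ hKR]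
  have key2 : ∀ (c : ℝ) n, x n < c * K / N ↔ x n * N / K < c := by
    intro c n
    rw [lt_div_iff₀ hNR, div_lt_iff₀ hKR]
  have hlb : ∀ n, (b n : ℝ) * K / N ≤ x n := by
    intro n
    rw [key1]
    calc (b n : ℝ) ≤ (⌊x n * N / K⌋₊ : ℝ) := by exact_mod_cast min_le_left _ _
      _ ≤ x n * N / K := Nat.floor_le (hxNK n)
  have hub : ∀ n, x n < ((b n : ℝ) + 1) * K / N := by
    intro n
    rw [key2]
    by_cases hc : ⌊x n * N / K⌋₊ ≤ Q
    · have hbe : b n = ⌊x n * N / K⌋₊ := min_eq_left hc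
      rw [hbe]
      exact Nat.lt_floor_add_one _
    · have hbe : b n = Q := min_eq_right (le_of_not_ge hc)
      rw [hbe]
      rw [div_lt_iff₀ hKR]
      have hQKR : (N:ℝ) < ((Q:ℝ)+1) * K := by exact_mod_cast hQK
      nlinarith [hx1 n, hx0 n]
  have hAB : ∀ i, A i = (B (i % M)).card := by
    intro i
    rw [hA i]
    have hBe : B (i % M) = Finset.filter (fun n => b n = i % M) (Finset.Icc 1 N) := rfl
    rw [hBe]
    apply congrArg Finset.card
    apply Finset.filter_congr
    intro n _
    simp only [Set.mem_Ico]
    have hrM : i % M < M := Nat.mod_lt _ hM0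
    have hrQ : i % M ≤ Q := by omega
    by_cases hre : i % M = Q
    · rw [if_pos hre, hre]
      constructor
      · rintro ⟨h1, _⟩
        have h2 : (Q : ℝ) ≤ x n * N / K := (key1 _ n).1 h1
        have h3 : Q ≤ ⌊x n * N / K⌋₊ := Nat.le_floor h2
        simp only [hb]
        omega
      · intro hbn
        refine ⟨?_, hx1 n⟩
        have := hlb n
        rwa [hbn] at this
    · rw [if_neg hre]
      have hrQ' : i % M < Q := lt_of_le_of_ne hrQ hre
      constructor
      · rintro ⟨h1, h2⟩
        have hfl : ⌊x n * N / K⌋₊ = i % M := by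
          rw [Nat.floor_eq_iff (hxNK n)]
          exact ⟨(key1 _ n).1 h1, (key2 _ n).1 h2⟩
        simp only [hb]
        omega
      · intro hbn
        have h1 := hlb n
        have h2 := hub n
        rw [hbn] at h1 h2
        exact ⟨h1, h2⟩
  -- multiplied-form bounds
  have hlb' : ∀ n, (b n : ℝ) * K ≤ x n * N := fun n => (div_le_iff₀ hNR).1 (hlb n)
  have hub' : ∀ n, x n * N < ((b n : ℝ) + 1) * K := fun n => (lt_div_iff₀ hNR).1 (hub n)
  have hMKR : (N:ℝ) ≤ (M:ℝ) * K := by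
    have h1 : N ≤ M * K := by
      have h3 : M * K = (Q + 1) * K := by rw [hM]
      omega
    exact_mod_cast h1
  have hLKpos : (0:ℝ) < (L:ℝ) * K := by positivity
  have hL1R : (1:ℝ) ≤ (L:ℝ) := by exact_mod_cast hL1
  have hKLK : (K:ℝ) ≤ (L:ℝ) * K := by nlinarith
  have hdivlt : ∀ y : ℝ, y * N < (L:ℝ) * K → y < (L:ℝ) * K / N :=
    fun y h => (lt_div_iff₀ hNR).2 h
  have hsame : ∀ l m : ℕ, b l = b m → nidist (x l - x m) < (L:ℝ) * K / N := by
    intro l m hblm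
    have hnid : nidist (x l - x m) ≤ |x l - x m| := by simpa using nidist_le (x l - x m) 0
    have h1 := hub' l
    have h2 := hlb' m
    have h3 := hub' m
    have h4 := hlb' l
    rw [hblm] at h1 h4
    have hup : (x l - x m) * N < (L:ℝ) * K := by nlinarith [hKLK]
    have hdn : (x m - x l) * N < (L:ℝ) * K := by nlinarith [hKLK]
    have habs : |x l - x m| < (L:ℝ) * K / N := by
      rw [abs_sub_lt_iff]
      exact ⟨hdivlt _ hup, hdivlt _ hdn⟩
    linarith
  have hnear : ∀ l m k : ℕ, 1 ≤ k → k < L → b m = (b l + k) % M →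
      nidist (x m - x l) < (L:ℝ) * K / N := by
    intro l m k hk1 hkL hbm
    have haM : b l < M := hbM l
    have hkLR : (k:ℝ) + 1 ≤ L := by exact_mod_cast hkL
    have hkK : ((k:ℝ) + 1) * K ≤ (L:ℝ) * K := by nlinarith
    have hk1R : (1:ℝ) ≤ (k:ℝ) := by exact_mod_cast hk1
    have hkgeK : (K:ℝ) ≤ (k:ℝ) * K := by nlinarith
    have h1 := hub' m
    have h2 := hlb' m
    have h3 := hub' l
    have h4 := hlb' l
    by_cases hwrap : b l + k < M
    · have hc : b m = b l + k := by rw [hbm, Nat.mod_eq_of_lt hwrap]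
      have hcR : (b m : ℝ) = (b l : ℝ) + k := by rw [hc]; push_cast; ring
      have hnid : nidist (x m - x l) ≤ |x m - x l| := by simpa using nidist_le (x m - x l) 0
      rw [hcR] at h1 h2
      have hup : (x m - x l) * N < (L:ℝ) * K := by nlinarith [hkK]
      have hdn : (x l - x m) * N < (L:ℝ) * K := by nlinarith [hkgeK, hLKpos]
      have habs : |x m - x l| < (L:ℝ) * K / N := by
        rw [abs_sub_lt_iff]
        exact ⟨hdivlt _ hup, hdivlt _ hdn⟩
      linarith
    · have hc2 : b m + M = b l + k := by
        have hmod : (b l + k) % M = b l + k - M := by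
          rw [Nat.mod_eq_sub_mod (le_of_not_gt hwrap), Nat.mod_eq_of_lt (by omega)]
        rw [hbm, hmod]
        omega
      have hcR : (b m : ℝ) + M = (b l : ℝ) + k := by exact_mod_cast hc2
      have hnid : nidist (x m - x l) ≤ |x m - x l + 1| := by
        simpa using nidist_le (x m - x l) (-1)
      have hxlN : x l * N < N := by nlinarith [hx1 l]
      have hbm0 : (0:ℝ) ≤ (b m : ℝ) * K := by positivity
      have hMK : ((b m : ℝ) + M) * K = ((b l : ℝ) + k) * K := by rw [hcR]
      have hup : (x m - x l + 1) * N < (L:ℝ) * K := by nlinarith [hMKR, hkK]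
      have hdn : (-(x m - x l + 1)) * N < (L:ℝ) * K := by nlinarith [hLKpos]
      have habs : |x m - x l + 1| < (L:ℝ) * K / N := by
        rw [abs_lt]
        refine ⟨?_, hdivlt _ hup⟩
        have := hdivlt _ hdn
        linarith
      linarith

  -- counting part
  set E : Finset (ℕ × ℕ) := Finset.Icc 1 N ×ˢ Finset.Icc 1 N with hE
  set c1 : ℕ × ℕ → Prop := fun p => p.1 ≠ p.2 ∧ b p.1 = b p.2 with hc1d
  set c2 : ℕ × ℕ → Prop := fun p => ∃ k ∈ Finset.Ico 1 L, b p.2 = (b p.1 + k) % M with hc2d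
  set c3 : ℕ × ℕ → Prop := fun p => ∃ k ∈ Finset.Ico 1 L, b p.1 = (b p.2 + k) % M with hc3d
  have hmemB : ∀ i n, n ∈ B i ↔ n ∈ Finset.Icc 1 N ∧ b n = i := fun i n => Finset.mem_filter
  have hsub : ∀ p : ℕ × ℕ, (c1 p ∨ c2 p ∨ c3 p) →
      p.1 ≠ p.2 ∧ nidist (x p.1 - x p.2) < ((L * K : ℕ) : ℝ) / N := by
    intro p hp
    have hcast : ((L * K : ℕ) : ℝ) / N = (L:ℝ) * K / N := by push_cast; ring
    rw [hcast]
    rcases hp with h | h | h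
    · rw [hc1d] at h
      exact ⟨h.1, hsame _ _ h.2⟩
    · rw [hc2d] at h
      obtain ⟨k, hk, hbk⟩ := h
      simp only [Finset.mem_Ico] at hk
      have hne : b p.1 ≠ b p.2 := by
        intro he
        rw [← he] at hbk
        exact shift_ne (hbM p.1) hk.1 (by omega) hbk.symm
      refine ⟨fun he => hne (by rw [he]), ?_⟩
      have hd := hnear p.1 p.2 k hk.1 hk.2 hbk
      have heq : x p.1 - x p.2 = -(x p.2 - x p.1) := by ring
      rw [heq, nidist_neg]
      exact hd
    · rw [hc3d] at h
      obtain ⟨k, hk, hbk⟩ := h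
      simp only [Finset.mem_Ico] at hk
      have hne : b p.1 ≠ b p.2 := by
        intro he
        rw [he] at hbk
        exact shift_ne (hbM p.2) hk.1 (by omega) hbk.symm
      exact ⟨fun he => hne (by rw [he]), hnear p.2 p.1 k hk.1 hk.2 hbk⟩
  have hdisj12 : ∀ p, c1 p → ¬ c2 p := by
    rintro p ⟨hne, heq⟩ ⟨k, hk, hbk⟩
    simp only [Finset.mem_Ico] at hk
    rw [← heq] at hbk
    exact shift_ne (hbM p.1) hk.1 (by omega) hbk.symm
  have hdisj13 : ∀ p, c1 p → ¬ c3 p := by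
    rintro p ⟨hne, heq⟩ ⟨k, hk, hbk⟩
    simp only [Finset.mem_Ico] at hk
    rw [heq] at hbk
    exact shift_ne (hbM p.2) hk.1 (by omega) hbk.symm
  have hdisj23 : ∀ p, c2 p → ¬ c3 p := by
    rintro p ⟨k, hk, hbk⟩ ⟨k', hk', hbk'⟩
    simp only [Finset.mem_Ico] at hk hk'
    rw [hbk, Nat.mod_add_mod, Nat.add_assoc] at hbk'
    exact shift_ne (hbM p.1) (by omega) (by omega) hbk'.symm
  have hd12 : Disjoint (E.filter c1) (E.filter c2) :=
    Finset.disjoint_filter.2 fun p _ => hdisj12 p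
  have hd13 : Disjoint (E.filter c1) (E.filter c3) :=
    Finset.disjoint_filter.2 fun p _ => hdisj13 p
  have hd23 : Disjoint (E.filter c2) (E.filter c3) :=
    Finset.disjoint_filter.2 fun p _ => hdisj23 p
  have hdU : Disjoint (E.filter c1 ∪ E.filter c2) (E.filter c3) := by
    rw [Finset.disjoint_union_left]
    exact ⟨hd13, hd23⟩
  have hcardU : (E.filter c1 ∪ E.filter c2 ∪ E.filter c3).card
      = (E.filter c1).card + (E.filter c2).card + (E.filter c3).card := by
    rw [Finset.card_union_of_disjoint hdU, Finset.card_union_of_disjoint hd12]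
  have hGle : (E.filter c1 ∪ E.filter c2 ∪ E.filter c3).card
      ≤ pairCount x N ((L * K : ℕ) : ℝ) := by
    unfold pairCount
    apply Finset.card_le_card
    intro p hp
    simp only [Finset.mem_union] at hp
    have hpE : p ∈ E := by
      rcases hp with (h | h) | h <;> exact Finset.mem_filter.1 h |>.1
    have hpc : c1 p ∨ c2 p ∨ c3 p := by
      rcases hp with (h | h) | h
      · exact Or.inl (Finset.mem_filter.1 h).2
      · exact Or.inr (Or.inl (Finset.mem_filter.1 h).2)
      · exact Or.inr (Or.inr (Finset.mem_filter.1 h).2)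
    exact Finset.mem_filter.2 ⟨hpE, hsub p hpc⟩
  have hc1card : (E.filter c1).card
      = ∑ i ∈ Finset.range M, ((B i).card * (B i).card - (B i).card) := by
    rw [Finset.card_eq_sum_card_fiberwise (s := E.filter c1) (t := Finset.range M)
      (f := fun p => b p.1) (fun p _ => Finset.mem_range.2 (hbM p.1))]
    apply Finset.sum_congr rfl
    intro i _
    have hset : Finset.filter (fun p => b p.1 = i) (E.filter c1) = (B i).offDiag := by
      ext p
      simp only [Finset.mem_filter, Finset.mem_offDiag, hE, Finset.mem_product, hmemB, hc1d]
      constructor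
      · rintro ⟨⟨⟨h1, h2⟩, h3, h4⟩, h5⟩
        exact ⟨⟨h1, h5⟩, ⟨h2, by omega⟩, h3⟩
      · rintro ⟨⟨h1, h5⟩, ⟨h2, h6⟩, h3⟩
        exact ⟨⟨⟨h1, h2⟩, h3, by omega⟩, h5⟩
    rw [hset, Finset.offDiag_card]
  have hWcard : ∀ i,
      (Finset.filter (fun m => ∃ k ∈ Finset.Ico 1 L, b m = (i + k) % M) (Finset.Icc 1 N)).card
        = ∑ j ∈ Finset.Ico (i+1) (i+L), (B (j % M)).card := by
    intro i
    have hbu : Finset.filter (fun m => ∃ k ∈ Finset.Ico 1 L, b m = (i + k) % M) (Finset.Icc 1 N)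
        = (Finset.Ico (i+1) (i+L)).biUnion (fun j => B (j % M)) := by
      ext m
      simp only [Finset.mem_filter, Finset.mem_biUnion, hmemB, Finset.mem_Ico]
      constructor
      · rintro ⟨hm, k, hk, hbm⟩
        exact ⟨i + k, ⟨by omega, by omega⟩, hm, by rw [hbm]⟩
      · rintro ⟨j, hj, hm, hbm⟩
        exact ⟨hm, j - i, ⟨by omega, by omega⟩, by rw [hbm]; congr 1; omega⟩
    rw [hbu, Finset.card_biUnion]
    intro j1 h1 j2 h2 hne
    simp only [Finset.mem_coe, Finset.mem_Ico] at h1 h2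
    have hjm : j1 % M ≠ j2 % M := by
      rcases Nat.lt_or_ge j1 j2 with h | h
      · exact mod_ne_mod h (by omega)
      · have hlt : j2 < j1 := by omega
        exact (mod_ne_mod hlt (by omega)).symm
    exact Finset.disjoint_filter.2 (fun n _ hb1 hb2 => hjm (by omega))
  have hc2card : (E.filter c2).card
      = ∑ i ∈ Finset.range M,
          (B i).card * ∑ j ∈ Finset.Ico (i+1) (i+L), (B (j % M)).card := by
    rw [Finset.card_eq_sum_card_fiberwise (s := E.filter c2) (t := Finset.range M)
      (f := fun p => b p.1) (fun p _ => Finset.mem_range.2 (hbM p.1))]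
    apply Finset.sum_congr rfl
    intro i _
    have hset : Finset.filter (fun p => b p.1 = i) (E.filter c2)
        = (B i) ×ˢ (Finset.filter (fun m => ∃ k ∈ Finset.Ico 1 L, b m = (i + k) % M)
            (Finset.Icc 1 N)) := by
      ext p
      simp only [Finset.mem_filter, Finset.mem_product, hE, hmemB, hc2d]
      constructor
      · rintro ⟨⟨⟨h1, h2⟩, k, hk, hbk⟩, hb1⟩
        exact ⟨⟨h1, hb1⟩, h2, k, hk, by rw [hbk, hb1]⟩
      · rintro ⟨⟨h1, hb1⟩, h2, k, hk, hbk⟩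
        exact ⟨⟨⟨h1, h2⟩, k, hk, by rw [hbk, hb1]⟩, hb1⟩
    rw [hset, Finset.card_product, hWcard i]
  have hc3card : (E.filter c3).card = (E.filter c2).card := by
    refine Finset.card_bij' (i := fun p _ => (p.2, p.1)) (j := fun p _ => (p.2, p.1)) ?_ ?_ ?_ ?_
    · intro p hp
      simp only [Finset.mem_filter, hE, Finset.mem_product, hc2d, hc3d] at hp ⊢
      exact ⟨⟨hp.1.2, hp.1.1⟩, hp.2⟩
    · intro p hp
      simp only [Finset.mem_filter, hE, Finset.mem_product, hc2d, hc3d] at hp ⊢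
      exact ⟨⟨hp.1.2, hp.1.1⟩, hp.2⟩
    · intro p _; rfl
    · intro p _; rfl
  have hterm : ∀ t w : ℕ, t * (t - 1) + 2 * t * w = (t * t - t) + (t * w + t * w) := by
    intro t w
    cases t with
    | zero => simp
    | succ u =>
      have h1 : (u + 1) * (u + 1) = (u + 1) * u + (u + 1) := by ring
      rw [h1, Nat.add_sub_cancel, Nat.add_sub_cancel]
      ring
  have hmain : ∑ i ∈ Finset.range M, ((B i).card * ((B i).card - 1)
        + 2 * (B i).card * ∑ j ∈ Finset.Ico (i+1) (i+L), (B (j % M)).card)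
      ≤ pairCount x N ((L * K : ℕ) : ℝ) := by
    calc ∑ i ∈ Finset.range M, ((B i).card * ((B i).card - 1)
          + 2 * (B i).card * ∑ j ∈ Finset.Ico (i+1) (i+L), (B (j % M)).card)
        = ∑ i ∈ Finset.range M, (((B i).card * (B i).card - (B i).card)
            + ((B i).card * (∑ j ∈ Finset.Ico (i+1) (i+L), (B (j % M)).card)
              + (B i).card * (∑ j ∈ Finset.Ico (i+1) (i+L), (B (j % M)).card))) :=
          Finset.sum_congr rfl fun i _ => hterm _ _
      _ = (∑ i ∈ Finset.range M, ((B i).card * (B i).card - (B i).card))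
          + ((∑ i ∈ Finset.range M, (B i).card * ∑ j ∈ Finset.Ico (i+1) (i+L), (B (j % M)).card)
            + (∑ i ∈ Finset.range M, (B i).card * ∑ j ∈ Finset.Ico (i+1) (i+L), (B (j % M)).card)) := by
          rw [Finset.sum_add_distrib, Finset.sum_add_distrib]
      _ = (E.filter c1).card + ((E.filter c2).card + (E.filter c3).card) := by
          simp only [hc1card, hc2card, hc3card]
      _ = (E.filter c1 ∪ E.filter c2 ∪ E.filter c3).card := by
          rw [hcardU]
          omega
      _ ≤ pairCount x N ((L * K : ℕ) : ℝ) := hGle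
  have hAsum : ∑ i ∈ Finset.range M, (A i * (A i - 1)
        + 2 * A i * ∑ j ∈ Finset.Ico (i+1) (i+L), A j)
      = ∑ i ∈ Finset.range M, ((B i).card * ((B i).card - 1)
        + 2 * (B i).card * ∑ j ∈ Finset.Ico (i+1) (i+L), (B (j % M)).card) := by
    apply Finset.sum_congr rfl
    intro i hi
    have h1 : A i = (B i).card := by rw [hAB i, Nat.mod_eq_of_lt (Finset.mem_range.1 hi)]
    rw [h1, show (∑ j ∈ Finset.Ico (i+1) (i+L), A j)
        = ∑ j ∈ Finset.Ico (i+1) (i+L), (B (j % M)).card from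
      Finset.sum_congr rfl fun j _ => hAB j]
  have hnat : ∑ i ∈ Finset.range M, (A i * (A i - 1)
        + 2 * A i * ∑ j ∈ Finset.Ico (i+1) (i+L), A j)
      ≤ pairCount x N ((L * K : ℕ) : ℝ) := by rw [hAsum]; exact hmain
  have hcastL : ∑ i ∈ Finset.range M, ((A i : ℝ) * ((A i : ℝ) - 1)
        + 2 * (A i : ℝ) * ∑ j ∈ Finset.Ico (i+1) (i+L), (A j : ℝ))
      = ((∑ i ∈ Finset.range M, (A i * (A i - 1)
        + 2 * A i * ∑ j ∈ Finset.Ico (i+1) (i+L), A j) : ℕ) : ℝ) := by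
    rw [Nat.cast_sum]
    apply Finset.sum_congr rfl
    intro i _
    rcases Nat.eq_zero_or_pos (A i) with h0 | h1
    · simp [h0]
    · push_cast [Nat.cast_sub h1]
      ring
  rw [hcastL]
  exact_mod_cast hnat
end
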